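/- For the Douglas–Rachford operator T, the orthogonal projection onto Fix T satisfies P_{Fix T} = P_{U∩V} + P_{U^⊥ ∩ V^⊥}, and moreover P_{Fix T} T = T P_{Fix T} = P_{Fix T}. -/

import Mathlib

noncomputable section

variable {X : Type*} [NormedAddCommGroup X] [InnerProductSpace ℝ X] [CompleteSpace X]

/-- The orthogonal projection onto a closed subspace `W`, as an operator on `X`. -/
noncomputable def proj (W : Submodule ℝ X) [Submodule.HasOrthogonalProjection W] : X →L[ℝ] X :=
  W.subtypeL.comp (Submodule.orthogonalProjectionOnto W)

instance infHOP (U V : Submodule ℝ X) [CompleteSpace U] [CompleteSpace V] :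
    Submodule.HasOrthogonalProjection (U ⊓ V) := by
  have hU : IsClosed (U : Set X) := (completeSpace_coe_iff_isComplete.mp ‹_›).isClosed
  have hV : IsClosed (V : Set X) := (completeSpace_coe_iff_isComplete.mp ‹_›).isClosed
  have : CompleteSpace (U ⊓ V : Submodule ℝ X) := (hU.inter hV).completeSpace_coe
  infer_instance

/-- The fixed point set `Fix T = {x | T x = x}` of a continuous linear operator `T`,
as a submodule of `X`. -/
noncomputable def fixedSpace (T : X →L[ℝ] X) : Submodule ℝ X := LinearMap.ker ((T - 1 : X →L[ℝ] X) : X →ₗ[ℝ] X)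

instance fixedSpaceHOP (T : X →L[ℝ] X) : Submodule.HasOrthogonalProjection (fixedSpace T) := by
  have h : IsClosed ((fixedSpace T : Submodule ℝ X) : Set X) := by
    have : ((fixedSpace T : Submodule ℝ X) : Set X) = {x | T x = x} := by
      ext x; simp [fixedSpace, LinearMap.mem_ker, sub_eq_zero]
    rw [this]
    exact isClosed_eq T.continuous continuous_id
  have : CompleteSpace (fixedSpace T) := h.completeSpace_coe
  infer_instance

/-- The reflector `R_W = 2 P_W − Id` associated with `W`. -/
noncomputable def reflector (W : Submodule ℝ X) [Submodule.HasOrthogonalProjection W] : X →L[ℝ] X :=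
  2 • proj W - 1

/-- The Douglas–Rachford operator `T = T_{V,U} = P_V (2 P_U − Id) + Id − P_U`.
(The first argument is `U`, the second is `V`.) -/
noncomputable def drOperator (U V : Submodule ℝ X) [Submodule.HasOrthogonalProjection U]
    [Submodule.HasOrthogonalProjection V] : X →L[ℝ] X :=
  proj V * (2 • proj U - 1) + 1 - proj U

/-- The cosine of the Friedrichs angle between `U` and `V`. -/
noncomputable def friedrichs (U V : Submodule ℝ X) : ℝ :=
  sSup {c : ℝ | ∃ u v : X, u ∈ U ⊓ (U ⊓ V)ᗮ ∧ v ∈ V ⊓ (U ⊓ V)ᗮ ∧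
    ‖u‖ ≤ 1 ∧ ‖v‖ ≤ 1 ∧ c = inner ℝ u v}

open RealInnerProductSpace

lemma proj_apply' (W : Submodule ℝ X) [Submodule.HasOrthogonalProjection W] (x : X) :
    proj W x = (Submodule.orthogonalProjectionOnto W x : X) := rfl

lemma proj_eq_self' {W : Submodule ℝ X} [Submodule.HasOrthogonalProjection W] {x : X} (hx : x ∈ W) :
    proj W x = x :=
  Submodule.starProjection_eq_self_iff.mpr hx

lemma proj_eq_zero' {W : Submodule ℝ X} [Submodule.HasOrthogonalProjection W] {x : X} (hx : x ∈ Wᗮ) :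
    proj W x = 0 := by
  rw [proj_apply', Submodule.orthogonalProjectionOnto_eq_zero_iff.mpr hx, ZeroMemClass.coe_zero]

lemma mem_fixedSpace' {T : X →L[ℝ] X} {x : X} : x ∈ fixedSpace T ↔ T x = x := by
  simp [fixedSpace, LinearMap.mem_ker, sub_eq_zero]

lemma drOperator_apply' (U V : Submodule ℝ X) [Submodule.HasOrthogonalProjection U]
    [Submodule.HasOrthogonalProjection V] (x : X) :
    drOperator U V x = proj V (2 • proj U x - x) + x - proj U x := by
  simp [drOperator, ContinuousLinearMap.sub_apply, ContinuousLinearMap.add_apply,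
    ContinuousLinearMap.mul_apply, ContinuousLinearMap.smul_apply,
    ContinuousLinearMap.one_apply]

lemma fixedSpace_dr_eq (U V : Submodule ℝ X) [CompleteSpace U] [CompleteSpace V] :
    fixedSpace (drOperator U V) = (U ⊓ V) ⊔ (Uᗮ ⊓ Vᗮ) := by
  apply le_antisymm
  · intro x hx
    rw [mem_fixedSpace', drOperator_apply'] at hx
    set u := proj U x with hu
    have hx' : proj V (2 • u - x) = u := by
      have h1 : proj V (2 • u - x) - u = proj V (2 • u - x) + x - u - x := by abel
      rw [hx, sub_self] at h1
      exact sub_eq_zero.mp h1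
    have huU : u ∈ U := by rw [hu, proj_apply']; exact SetLike.coe_mem _
    have hwU : x - u ∈ Uᗮ := by
      rw [hu, proj_apply']; exact Submodule.sub_starProjection_mem_orthogonal (K := U) x
    have hsplit : (2 : ℕ) • u - x = u - (x - u) := by
      rw [two_smul]; abel
    have h2 : proj V u - proj V (x - u) = u := by
      rw [← map_sub, ← hsplit, hx']
    -- the element `proj V (x - u)` lies in both `V` and `Vᗮ`
    have hzV : proj V (x - u) ∈ V := by rw [proj_apply']; exact SetLike.coe_mem _
    have hzVp : proj V (x - u) ∈ Vᗮ := by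
      have : proj V (x - u) = proj V u - u := by
        have h4 : proj V (x - u) - (proj V u - u) = u - (proj V u - proj V (x - u)) := by abel
        rw [h2, sub_self] at h4
        exact sub_eq_zero.mp h4
      rw [this]
      exact Vᗮ.neg_mem_iff.mp (by
        have : -(proj V u - u) = u - proj V u := by abel
        rw [this, proj_apply']
        exact Submodule.sub_starProjection_mem_orthogonal (K := V) u)
    have hz0 : proj V (x - u) = 0 := by
      have := (Submodule.mem_orthogonal V _).mp hzVp _ hzV
      exact inner_self_eq_zero.mp this
    have huV : u ∈ V := by
      have h4 : proj V u = u := by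
        have := h2; rw [hz0, sub_zero] at this; exact this
      rw [proj_apply'] at h4
      exact Submodule.starProjection_eq_self_iff.mp h4
    have hwV : x - u ∈ Vᗮ := by
      rw [proj_apply'] at hz0
      exact Submodule.orthogonalProjectionOnto_eq_zero_iff.mp (Subtype.ext hz0)
    exact Submodule.mem_sup.mpr ⟨u, ⟨huU, huV⟩, x - u, ⟨hwU, hwV⟩, by abel⟩
  · apply sup_le
    · intro a ha
      rw [mem_fixedSpace', drOperator_apply', proj_eq_self' ha.1]
      have h2a : (2 : ℕ) • a - a = a := by rw [two_smul]; abel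
      rw [h2a, proj_eq_self' ha.2]
      abel
    · intro b hb
      rw [mem_fixedSpace', drOperator_apply', proj_eq_zero' hb.1]
      have h2b : (2 : ℕ) • (0 : X) - b = -b := by simp
      rw [h2b, map_neg, proj_eq_zero' hb.2]
      abel

lemma proj_fix_eq_sum (U V : Submodule ℝ X) [CompleteSpace U] [CompleteSpace V] :
    proj (fixedSpace (drOperator U V)) = proj (U ⊓ V) + proj (Uᗮ ⊓ Vᗮ) := by
  ext x
  rw [ContinuousLinearMap.add_apply, proj_apply', proj_apply', proj_apply']
  apply Submodule.eq_starProjection_of_mem_of_inner_eq_zero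
  · rw [fixedSpace_dr_eq]
    exact Submodule.mem_sup.mpr ⟨_, SetLike.coe_mem _, _, SetLike.coe_mem _, rfl⟩
  · intro w hw
    rw [fixedSpace_dr_eq] at hw
    obtain ⟨a, ha, b, hb, rfl⟩ := Submodule.mem_sup.mp hw
    set Pa : X := (Submodule.orthogonalProjectionOnto (U ⊓ V) x : X) with hPa
    set Pb : X := (Submodule.orthogonalProjectionOnto (Uᗮ ⊓ Vᗮ) x : X) with hPb
    have hPaM : Pa ∈ U ⊓ V := SetLike.coe_mem _
    have hPbM : Pb ∈ Uᗮ ⊓ Vᗮ := SetLike.coe_mem _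
    have h1 : ⟪x - Pa, a⟫ = 0 := Submodule.starProjection_inner_eq_zero (K := U ⊓ V) x a ha
    have h2 : ⟪x - Pb, b⟫ = 0 := Submodule.starProjection_inner_eq_zero (K := Uᗮ ⊓ Vᗮ) x b hb
    have h3 : ⟪Pb, a⟫ = 0 := by
      rw [real_inner_comm]
      exact (Submodule.mem_orthogonal U Pb).mp hPbM.1 a ha.1
    have h4 : ⟪Pa, b⟫ = 0 := (Submodule.mem_orthogonal U b).mp hb.1 Pa hPaM.1
    rw [inner_sub_left] at h1 h2
    simp only [inner_sub_left, inner_add_left, inner_add_right]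
    linarith

/-- `P_{Fix T} = P_{U∩V} + P_{U^⊥ ∩ V^⊥}` and
`P_{Fix T} T = T P_{Fix T} = P_{Fix T}`. -/
theorem proj_fixedSpace_drOperator
    (U V : Submodule ℝ X) [CompleteSpace U] [CompleteSpace V] :
    proj (fixedSpace (drOperator U V)) = proj (U ⊓ V) + proj (Uᗮ ⊓ Vᗮ) ∧
    proj (fixedSpace (drOperator U V)) * drOperator U V = proj (fixedSpace (drOperator U V)) ∧
    drOperator U V * proj (fixedSpace (drOperator U V)) = proj (fixedSpace (drOperator U V)) := by
  refine ⟨proj_fix_eq_sum U V, ?_, ?_⟩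
  · -- P ∘ T = P
    ext x
    rw [ContinuousLinearMap.mul_apply]
    have hmem : drOperator U V x - x ∈ (fixedSpace (drOperator U V))ᗮ := by
      rw [fixedSpace_dr_eq]
      rw [Submodule.mem_orthogonal']
      intro w hw
      obtain ⟨a, ha, b, hb, rfl⟩ := Submodule.mem_sup.mp hw
      set u : X := proj U x with hu
      have huU : u ∈ U := by rw [hu, proj_apply']; exact SetLike.coe_mem _
      have hwU : x - u ∈ Uᗮ := by
        rw [hu, proj_apply']; exact Submodule.sub_starProjection_mem_orthogonal (K := U) x
      have hT : drOperator U V x - x = proj V (2 • u - x) - u := by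
        rw [drOperator_apply', ← hu]; abel
      have hy : (2 : ℕ) • u - x = u + (u - x) := by rw [two_smul]; abel
      rw [real_inner_comm, inner_add_left, hT]
      have hPV : ∀ c : X, ⟪proj V (2 • u - x), c⟫ = ⟪2 • u - x, proj V c⟫ := by
        intro c
        rw [proj_apply', proj_apply']
        exact Submodule.inner_starProjection_left_eq_right (K := V) (2 • u - x) c
      have hax : ⟪u - x, a⟫ = 0 := by
        have h := (Submodule.mem_orthogonal U (x - u)).mp hwU a ha.1
        rw [show u - x = -(x - u) by abel, inner_neg_left, real_inner_comm, h, neg_zero]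
      have hA : ⟪proj V (2 • u - x) - u, a⟫ = 0 := by
        rw [inner_sub_left, hPV, proj_eq_self' ha.2, hy, inner_add_left, hax]
        ring
      have hB : ⟪proj V (2 • u - x) - u, b⟫ = 0 := by
        rw [inner_sub_left, hPV, proj_eq_zero' hb.2, inner_zero_right,
          (Submodule.mem_orthogonal U b).mp hb.1 u huU]
        ring
      have hA' : ⟪a, proj V (2 • u - x) - u⟫ = 0 := by rw [real_inner_comm]; exact hA
      have hB' : ⟪b, proj V (2 • u - x) - u⟫ = 0 := by rw [real_inner_comm]; exact hB
      rw [hA', hB', add_zero]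
    have h0 : proj (fixedSpace (drOperator U V)) (drOperator U V x)
        - proj (fixedSpace (drOperator U V)) x = 0 := by
      rw [← map_sub, proj_eq_zero' hmem]
    exact sub_eq_zero.mp h0
  · -- T ∘ P = P
    ext x
    rw [ContinuousLinearMap.mul_apply]
    exact mem_fixedSpace'.mp (by rw [proj_apply']; exact SetLike.coe_mem _)
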